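/- Let p ≥ 1 be a real number, let α ≥ 2 be an integer, and let 2 ≤ k ≤ α be an integer. Then Σ_{j ∈ (ℤ_{>0})^k, j₁+⋯+j_k = α} ∏_{i=1}^{k} j_i^{p·j_i} ≤ min{2 + 4^p, α} · (α−1)^{p(α−1)}. -/

import Mathlib

open Real Finset

private lemma bern_real (r : ℝ) (hr : 1 ≤ r) : ∀ m : ℕ, (r - m) * r ^ m ≤ (r - 1) ^ m * r := by
  intro m
  induction m with
  | zero => simp
  | succ m ih =>
    have h1 : (0:ℝ) ≤ r - 1 := by linarith
    have h2 : (r - 1) ^ (m+1) * r = (r-1) * ((r-1)^m * r) := by ring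
    have h3 : (r-1) * ((r-m) * r^m) ≤ (r-1) * ((r-1)^m * r) := by
      exact mul_le_mul_of_nonneg_left ih h1
    have h4 : (r - (m+1:ℕ)) * r ^ (m+1) ≤ (r-1) * ((r-m) * r^m) := by
      have hrm : (0:ℝ) ≤ r ^ m := by positivity
      have : (r-1)*((r-m)*r^m) - (r - (m+1:ℕ)) * r^(m+1) = (m:ℝ) * r^m := by
        push_cast; ring
      nlinarith [hrm, mul_nonneg (Nat.cast_nonneg (α := ℝ) m) hrm]
    rw [h2]; exact le_trans h4 h3

/-- `(n+1)^(2n+2) ≤ n^n * (n+2)^(n+2)` for `n ≥ 1`. -/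
private lemma hstep (n : ℕ) (hn : 1 ≤ n) :
    (n+1) ^ (2*n+2) ≤ n ^ n * (n+2) ^ (n+2) := by
  have key : ((n:ℝ)+1) ^ (2*n+2) ≤ (n:ℝ) ^ n * ((n:ℝ)+2) ^ (n+2) := by
    set r : ℝ := (n:ℝ) * ((n:ℝ)+2) with hr
    have hn1 : (1:ℝ) ≤ (n:ℝ) := by exact_mod_cast hn
    have hrr : (3:ℝ) ≤ r := by nlinarith
    have hb := bern_real r (by linarith) (n+1)
    -- (r - (n+1)) * r^(n+1) ≤ (r-1)^(n+1) * r
    have hs : (0:ℝ) < r - ((n:ℕ)+1 : ℕ) := by push_cast; nlinarith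
    have hA : ((n:ℝ)+1) ^ (2*n+2) = (r+1) ^ (n+1) := by
      have : (r+1) = ((n:ℝ)+1)^2 := by rw [hr]; ring
      rw [this, ← pow_mul]; ring_nf
    have hB : (n:ℝ) ^ n * ((n:ℝ)+2) ^ (n+2) = r ^ n * ((n:ℝ)+2)^2 := by
      rw [hr, mul_pow]; ring
    rw [hA, hB]
    -- (r+1)^(n+1) * ((r - (n+1)) * r^(n+1)) ≤ (r+1)^(n+1)(r-1)^(n+1) r = (r²-1)^(n+1) r ≤ r^(2n+3)
    have hpos1 : (0:ℝ) < (r+1)^(n+1) := by positivity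
    have c1 : (r+1)^(n+1) * ((r - ((n:ℕ)+1:ℕ)) * r^(n+1)) ≤ (r+1)^(n+1) * ((r-1)^(n+1) * r) :=
      mul_le_mul_of_nonneg_left hb (le_of_lt hpos1)
    have c2 : (r+1)^(n+1) * ((r-1)^(n+1) * r) = (r^2-1)^(n+1) * r := by
      rw [← mul_assoc, ← mul_pow]; ring_nf
    have c3 : (r^2-1)^(n+1) * r ≤ (r^2)^(n+1) * r := by
      have : (r^2-1)^(n+1) ≤ (r^2)^(n+1) := by
        apply pow_le_pow_left₀ (by nlinarith) (by nlinarith)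
      nlinarith [this]
    have c4 : (r^2)^(n+1) * r = r^(n+1) * (r^n * r^2) := by
      rw [← pow_mul, ← pow_add, ← pow_add, ← pow_succ]; ring_nf
    have c5 : r^2 ≤ (r - ((n:ℕ)+1:ℕ)) * ((n:ℝ)+2)^2 := by
      push_cast; rw [hr]; nlinarith
    have c6 : r^(n+1) * (r^n * r^2) ≤ r^(n+1) * (r^n * ((r - ((n:ℕ)+1:ℕ)) * ((n:ℝ)+2)^2)) := by
      have hrn : (0:ℝ) ≤ r^n := by positivity
      have hrn1 : (0:ℝ) ≤ r^(n+1) := by positivity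
      apply mul_le_mul_of_nonneg_left _ hrn1
      exact mul_le_mul_of_nonneg_left c5 hrn
    have := le_trans (le_trans (le_trans c1 (le_of_eq c2)) c3) (le_trans (le_of_eq c4) c6)
    -- cancel (r - (n+1)) * r^(n+1)
    have hcancel : (r+1)^(n+1) ≤ r^n * ((n:ℝ)+2)^2 := by
      have hq : (0:ℝ) < (r - ((n:ℕ)+1:ℕ)) * r^(n+1) := by
        apply mul_pos hs; positivity
      rw [mul_comm ((r+1)^(n+1))] at this
      have h7 : r^(n+1) * (r^n * ((r - ((n:ℕ)+1:ℕ)) * ((n:ℝ)+2)^2))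
          = ((r - ((n:ℕ)+1:ℕ)) * r^(n+1)) * (r^n * ((n:ℝ)+2)^2) := by ring
      rw [h7] at this
      exact le_of_mul_le_mul_left this hq
    exact hcancel
  exact_mod_cast key


private lemma hmono : ∀ a b : ℕ, 1 ≤ a → a ≤ b →
    (a+1)^(a+1) * b^b ≤ a^a * (b+1)^(b+1) := by
  intro a b ha hab
  induction b with
  | zero => omega
  | succ b ih =>
    rcases Nat.lt_or_ge a (b+1) with h | h
    · have hab' : a ≤ b := by omega
      have ihb := ih hab'
      have hb1 : 1 ≤ b := le_trans ha hab'
      have hst := hstep b hb1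
      have h1 : (a+1)^(a+1) * (b+1)^(b+1) * b^b ≤ a^a * (b+1)^(b+1) * (b+1)^(b+1) := by
        calc (a+1)^(a+1) * (b+1)^(b+1) * b^b = ((a+1)^(a+1) * b^b) * (b+1)^(b+1) := by ring
        _ ≤ (a^a * (b+1)^(b+1)) * (b+1)^(b+1) := Nat.mul_le_mul_right _ ihb
        _ = a^a * (b+1)^(b+1) * (b+1)^(b+1) := by ring
      have h2 : a^a * (b+1)^(b+1) * (b+1)^(b+1) = a^a * (b+1)^(2*b+2) := by
        rw [mul_assoc, ← pow_add]; ring_nf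
      have h3 : a^a * (b+1)^(2*b+2) ≤ a^a * (b^b * (b+2)^(b+2)) :=
        Nat.mul_le_mul_left _ hst
      have h4 : (a+1)^(a+1) * (b+1)^(b+1) * b^b ≤ (a^a * (b+2)^(b+2)) * b^b := by
        calc (a+1)^(a+1) * (b+1)^(b+1) * b^b ≤ a^a * (b^b * (b+2)^(b+2)) := by
              rw [← h2] at h3; exact le_trans h1 h3
        _ = (a^a * (b+2)^(b+2)) * b^b := by ring
      have hbpos : 0 < b^b := Nat.pow_pos (by omega)
      exact Nat.le_of_mul_le_mul_right h4 hbpos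
    · have : a = b + 1 := by omega
      subst this
      exact le_of_eq (by ring)

/-- asymmetric combine: `c ≤ d+1` -/
private lemma combine' : ∀ c d : ℕ, 1 ≤ c → c ≤ d + 1 → c^c * d^d ≤ (c+d-1)^(c+d-1) := by
  intro c
  induction c with
  | zero => omega
  | succ c ih =>
    intro d hc hcd
    rcases Nat.eq_zero_or_pos c with rfl | hc1
    · simpa using le_of_eq (by congr 1 <;> omega)
    · have hstep2 : (c+1)^(c+1) * d^d ≤ c^c * (d+1)^(d+1) := hmono c d hc1 (by omega)
      have := ih (d+1) hc1 (by omega)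
      have he : c + (d+1) - 1 = (c+1) + d - 1 := by omega
      rw [he] at this
      exact le_trans hstep2 this

private lemma combine (a b : ℕ) (ha : 1 ≤ a) (hb : 1 ≤ b) :
    a^a * b^b ≤ (a+b-1)^(a+b-1) := by
  rcases le_or_gt a (b+1) with h | h
  · exact combine' a b ha h
  · have := combine' b a hb (by omega)
    calc a^a * b^b = b^b * a^a := by ring
    _ ≤ (b+a-1)^(b+a-1) := this
    _ = (a+b-1)^(a+b-1) := by rw [Nat.add_comm b a]

private lemma lemL' : ∀ c d : ℕ, 2 ≤ c → c ≤ d + 1 → 2 ≤ d → c^c * d^d ≤ 4*(c+d-2)^(c+d-2) := by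
  intro c
  induction c with
  | zero => omega
  | succ c ih =>
    intro d hc hcd hd
    rcases Nat.lt_or_ge c 2 with hc2 | hc2
    · have : c = 1 := by omega
      subst this
      have he : (1+1) + d - 2 = d := by omega
      rw [he]
      norm_num
    · have hstep2 : (c+1)^(c+1) * d^d ≤ c^c * (d+1)^(d+1) := hmono c d (by omega) (by omega)
      have := ih (d+1) hc2 (by omega) (by omega)
      have he : c + (d+1) - 2 = (c+1) + d - 2 := by omega
      rw [he] at this
      exact le_trans hstep2 this

private lemma lemL (a b : ℕ) (ha : 2 ≤ a) (hb : 2 ≤ b) :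
    a^a * b^b ≤ 4*(a+b-2)^(a+b-2) := by
  rcases le_or_gt a (b+1) with h | h
  · exact lemL' a b ha h hb
  · have := lemL' b a hb (by omega) ha
    calc a^a * b^b = b^b * a^a := by ring
    _ ≤ 4*(b+a-2)^(b+a-2) := this
    _ = 4*(a+b-2)^(a+b-2) := by rw [Nat.add_comm b a]

private lemma rpow_nat_mul (p : ℝ) (n : ℕ) : (n:ℝ) ^ (p * (n:ℝ)) = ((n^n : ℕ) : ℝ) ^ p := by
  rw [mul_comm, Real.rpow_mul (Nat.cast_nonneg n), Real.rpow_natCast]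
  push_cast
  ring

private lemma cast_rpow_le (p : ℝ) (hp : 0 ≤ p) {N M : ℕ} (h : N ≤ M) :
    ((N:ℝ))^p ≤ ((M:ℝ))^p :=
  Real.rpow_le_rpow (Nat.cast_nonneg N) (by exact_mod_cast h) hp

private lemma six_rpow (p : ℝ) (hp : 1 ≤ p) : 2 + (4:ℝ)^p ≤ (6:ℝ)^p := by
  have h2 : (2:ℝ) ≤ 2^p := by
    calc (2:ℝ) = 2^(1:ℝ) := (Real.rpow_one 2).symm
    _ ≤ 2^p := Real.rpow_le_rpow_of_exponent_le one_le_two hp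
  have h46 : (4:ℝ)^p + 2^p ≤ 6^p := by
    have e4 : (4:ℝ)^p = 6^p * (2/3:ℝ)^p := by
      rw [← Real.mul_rpow (by norm_num) (by norm_num)]
      norm_num
    have e2 : (2:ℝ)^p = 6^p * (1/3:ℝ)^p := by
      rw [← Real.mul_rpow (by norm_num) (by norm_num)]
      norm_num
    have b4 : (2/3:ℝ)^p ≤ 2/3 := by
      calc (2/3:ℝ)^p ≤ (2/3:ℝ)^(1:ℝ) :=
            Real.rpow_le_rpow_of_exponent_ge (by norm_num) (by norm_num) hp
      _ = 2/3 := Real.rpow_one _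
    have b2 : (1/3:ℝ)^p ≤ 1/3 := by
      calc (1/3:ℝ)^p ≤ (1/3:ℝ)^(1:ℝ) :=
            Real.rpow_le_rpow_of_exponent_ge (by norm_num) (by norm_num) hp
      _ = 1/3 := Real.rpow_one _
    have h6 : (0:ℝ) ≤ 6^p := Real.rpow_nonneg (by norm_num) p
    rw [e4, e2]
    nlinarith
  linarith

private lemma onedim (p : ℝ) (hp : 1 ≤ p) (β : ℕ) (hβ : 2 ≤ β) :
    ∑ a ∈ Ico 1 β, ((a^a * (β-a)^(β-a) : ℕ) : ℝ)^p ≤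
      min (2 + (4:ℝ)^p) (β:ℝ) * (((β-1)^(β-1) : ℕ) : ℝ)^p := by
  have hp0 : 0 ≤ p := le_trans zero_le_one hp
  set X : ℝ := (((β-1)^(β-1) : ℕ) : ℝ)^p with hX
  have hX0 : 0 ≤ X := by positivity
  have hterm : ∀ a ∈ Ico 1 β, ((a^a * (β-a)^(β-a) : ℕ) : ℝ)^p ≤ X := by
    intro a ha
    rw [Finset.mem_Ico] at ha
    apply cast_rpow_le p hp0
    have := combine a (β-a) ha.1 (by omega)
    have he : a + (β-a) - 1 = β - 1 := by omega
    rwa [he] at this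
  have B1 : ∑ a ∈ Ico 1 β, ((a^a * (β-a)^(β-a) : ℕ) : ℝ)^p ≤ (β:ℝ) * X := by
    calc ∑ a ∈ Ico 1 β, ((a^a * (β-a)^(β-a) : ℕ) : ℝ)^p ≤ (Ico 1 β).card • X :=
          Finset.sum_le_card_nsmul _ _ _ hterm
    _ = ((β - 1 : ℕ) : ℝ) * X := by rw [Nat.card_Ico, nsmul_eq_mul]
    _ ≤ (β:ℝ) * X := by
        apply mul_le_mul_of_nonneg_right _ hX0
        exact_mod_cast Nat.sub_le β 1
  have B2 : ∑ a ∈ Ico 1 β, ((a^a * (β-a)^(β-a) : ℕ) : ℝ)^p ≤ (2 + (4:ℝ)^p) * X := by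
    rcases Nat.lt_or_ge β 3 with h3 | h3
    · -- β = 2
      have hb2 : β = 2 := by omega
      subst hb2
      have : Ico 1 2 = {1} := rfl
      rw [this, Finset.sum_singleton]
      norm_num
      have h1 : ((1:ℝ))^p = 1 := Real.one_rpow p
      rw [hX]
      norm_num
      nlinarith [Real.rpow_nonneg (by norm_num : (0:ℝ) ≤ 4) p]
    · -- β ≥ 3
      have e1 : ∑ a ∈ Ico 1 β, ((a^a * (β-a)^(β-a) : ℕ) : ℝ)^p
          = ((1^1 * (β-1)^(β-1) : ℕ) : ℝ)^p + ∑ a ∈ Ico 2 β, ((a^a * (β-a)^(β-a) : ℕ) : ℝ)^p :=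
        Finset.sum_eq_sum_Ico_succ_bot (by omega) _
      have e2 : ∑ a ∈ Ico 2 β, ((a^a * (β-a)^(β-a) : ℕ) : ℝ)^p
          = (∑ a ∈ Ico 2 (β-1), ((a^a * (β-a)^(β-a) : ℕ) : ℝ)^p)
            + (((β-1)^(β-1) * (β-(β-1))^(β-(β-1)) : ℕ) : ℝ)^p := by
        have : β = (β - 1) + 1 := by omega
        rw [this]
        rw [Finset.sum_Ico_succ_top (by omega)]
        congr 1 <;> · congr 1 <;> omega
      have hend1 : ((1^1 * (β-1)^(β-1) : ℕ) : ℝ)^p = X := by rw [hX]; norm_num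
      have hend2 : (((β-1)^(β-1) * (β-(β-1))^(β-(β-1)) : ℕ) : ℝ)^p = X := by
        rw [hX]
        have : β - (β-1) = 1 := by omega
        rw [this]
        norm_num
      have hmid : ∑ a ∈ Ico 2 (β-1), ((a^a * (β-a)^(β-a) : ℕ) : ℝ)^p ≤ (4:ℝ)^p * X := by
        have Y0 : (0:ℝ) ≤ (((β-2)^(β-2) : ℕ) : ℝ)^p := by positivity
        have hmt : ∀ a ∈ Ico 2 (β-1), ((a^a * (β-a)^(β-a) : ℕ) : ℝ)^p ≤
            (4:ℝ)^p * (((β-2)^(β-2) : ℕ) : ℝ)^p := by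
          intro a ha
          rw [Finset.mem_Ico] at ha
          have hL := lemL a (β-a) ha.1 (by omega)
          have he : a + (β-a) - 2 = β - 2 := by omega
          rw [he] at hL
          calc ((a^a * (β-a)^(β-a) : ℕ) : ℝ)^p ≤ ((4 * (β-2)^(β-2) : ℕ) : ℝ)^p :=
                cast_rpow_le p hp0 hL
          _ = (4:ℝ)^p * (((β-2)^(β-2) : ℕ) : ℝ)^p := by
              push_cast
              rw [Real.mul_rpow (by norm_num) (by positivity)]
        calc ∑ a ∈ Ico 2 (β-1), ((a^a * (β-a)^(β-a) : ℕ) : ℝ)^p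
            ≤ (Ico 2 (β-1)).card • ((4:ℝ)^p * (((β-2)^(β-2) : ℕ) : ℝ)^p) :=
              Finset.sum_le_card_nsmul _ _ _ hmt
        _ = ((β - 3 : ℕ) : ℝ) * ((4:ℝ)^p * (((β-2)^(β-2) : ℕ) : ℝ)^p) := by
              rw [Nat.card_Ico, nsmul_eq_mul]
              congr 2
        _ = (4:ℝ)^p * (((β - 3 : ℕ) : ℝ) * (((β-2)^(β-2) : ℕ) : ℝ)^p) := by ring
        _ ≤ (4:ℝ)^p * X := by
              apply mul_le_mul_of_nonneg_left _ (by positivity)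
              -- (β-3) * Y ≤ X
              have hc : ((β - 3 : ℕ) : ℝ) * (((β-2)^(β-2) : ℕ) : ℝ)^p
                  ≤ (((β-1) : ℕ) : ℝ)^p * (((β-2)^(β-2) : ℕ) : ℝ)^p := by
                apply mul_le_mul_of_nonneg_right _ Y0
                calc ((β - 3 : ℕ) : ℝ) ≤ ((β - 1 : ℕ) : ℝ) := by
                      exact_mod_cast Nat.sub_le_sub_left (by norm_num) β
                _ = ((β - 1 : ℕ) : ℝ)^(1:ℝ) := (Real.rpow_one _).symm
                _ ≤ ((β - 1 : ℕ) : ℝ)^p := by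
                      apply Real.rpow_le_rpow_of_exponent_le _ hp
                      exact_mod_cast (by omega : 1 ≤ β - 1)
              refine le_trans hc ?_
              have hmul : (((β-1) : ℕ) : ℝ)^p * (((β-2)^(β-2) : ℕ) : ℝ)^p
                  = ((((β-1) * (β-2)^(β-2)) : ℕ) : ℝ)^p := by
                rw [← Real.mul_rpow (Nat.cast_nonneg _) (Nat.cast_nonneg _)]
                push_cast; ring_nf
              rw [hmul, hX]
              apply cast_rpow_le p hp0
              calc (β-1) * (β-2)^(β-2) ≤ (β-1) * (β-1)^(β-2) :=
                    Nat.mul_le_mul_left _ (Nat.pow_le_pow_left (by omega) _)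
              _ = (β-1)^(β-2+1) := by rw [pow_succ]; ring
              _ = (β-1)^(β-1) := by congr 1; omega
      rw [e1, e2, hend1, hend2]
      calc X + ((∑ a ∈ Ico 2 (β-1), ((a^a * (β-a)^(β-a) : ℕ) : ℝ)^p) + X)
          ≤ X + ((4:ℝ)^p * X + X) := by linarith
      _ = (2 + (4:ℝ)^p) * X := by ring
  rcases min_cases (2 + (4:ℝ)^p) ((β:ℝ)) with ⟨heq, _⟩ | ⟨heq, _⟩ <;> rw [heq]
  · exact B2
  · exact B1
private def F (k n : ℕ) : Finset (Fin k → ℕ) :=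
  (Finset.Nat.antidiagonalTuple k n).filter (fun j => ∀ i, 0 < j i)

private lemma mem_F {k n : ℕ} {j : Fin k → ℕ} :
    j ∈ F k n ↔ (∑ i, j i = n ∧ ∀ i, 0 < j i) := by
  simp [F, Finset.Nat.mem_antidiagonalTuple]

private lemma F_empty {k n : ℕ} (h : n < k) : F k n = ∅ := by
  rw [Finset.eq_empty_iff_forall_notMem]
  intro j hj
  rw [mem_F] at hj
  have : (k:ℕ) ≤ ∑ i, j i := by
    calc (k:ℕ) = ∑ _i : Fin k, 1 := by simp
    _ ≤ ∑ i, j i := Finset.sum_le_sum (fun i _ => hj.2 i)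
  omega

private lemma decomp (p : ℝ) (m α : ℕ) (hm : 1 ≤ m) :
    ∑ j ∈ F (m+1) α, ∏ i, ((j i : ℝ) ^ (p * (j i : ℝ)))
      = ∑ a ∈ Ico 1 α, (a:ℝ)^(p*(a:ℝ)) *
          ∑ j ∈ F m (α - a), ∏ i, ((j i : ℝ) ^ (p * (j i : ℝ))) := by
  have : ∀ a ∈ Ico 1 α, (a:ℝ)^(p*(a:ℝ)) * ∑ j ∈ F m (α - a), ∏ i, ((j i : ℝ) ^ (p * (j i : ℝ)))
      = ∑ j ∈ F m (α - a), (a:ℝ)^(p*(a:ℝ)) * ∏ i, ((j i : ℝ) ^ (p * (j i : ℝ))) := by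
    intro a _; rw [Finset.mul_sum]
  rw [Finset.sum_congr rfl this, Finset.sum_sigma' (Ico 1 α) (fun a => F m (α - a))
    (fun a j => (a:ℝ)^(p*(a:ℝ)) * ∏ i, ((j i : ℝ) ^ (p * (j i : ℝ))))]
  apply Finset.sum_nbij' (i := fun j => (⟨j 0, Fin.tail j⟩ : Σ _a : ℕ, (Fin m → ℕ)))
    (j := fun x => Fin.cons x.1 x.2)
  · -- hi
    intro j hj
    rw [mem_F] at hj
    obtain ⟨hsum, hpos⟩ := hj
    rw [Fin.sum_univ_succ] at hsum
    have htail : 1 ≤ ∑ i : Fin m, j i.succ := by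
      have : j (⟨0, by omega⟩ : Fin m).succ ≤ ∑ i : Fin m, j i.succ :=
        Finset.single_le_sum (f := fun i : Fin m => j i.succ) (fun i _ => Nat.zero_le _)
          (Finset.mem_univ _)
      have h0 := hpos (⟨0, by omega⟩ : Fin m).succ
      omega
    rw [Finset.mem_sigma]
    constructor
    · rw [Finset.mem_Ico]
      have := hpos 0
      show 1 ≤ j 0 ∧ j 0 < α
      omega
    · rw [mem_F]
      refine ⟨?_, fun i => hpos i.succ⟩
      show ∑ i : Fin m, j i.succ = α - j 0
      omega
  · -- hj
    intro x hx
    rw [Finset.mem_sigma, Finset.mem_Ico, mem_F] at hx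
    obtain ⟨⟨ha1, ha2⟩, hsum, hpos⟩ := hx
    rw [mem_F]
    constructor
    · rw [Fin.sum_univ_succ]
      simp only [Fin.cons_zero, Fin.cons_succ]
      omega
    · intro i
      refine Fin.cases ?_ ?_ i
      · exact ha1
      · intro i'; simpa using hpos i'
  · intro j _; exact Fin.cons_self_tail j
  · intro x hx
    simp [Fin.tail_cons]
  · intro j _
    rw [Fin.prod_univ_succ]
    simp [Fin.tail]

private lemma F_one (n : ℕ) (hn : 1 ≤ n) : F 1 n = {![n]} := by
  rw [F, Finset.Nat.antidiagonalTuple_one, Finset.filter_singleton]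
  rw [if_pos]
  intro i
  fin_cases i
  exact hn
private lemma F_self {k : ℕ} : ∀ j ∈ F k k, j = fun _ => 1 := by
  intro j hj
  rw [mem_F] at hj
  obtain ⟨hsum, hpos⟩ := hj
  have h1 : ∑ i, j i = ∑ i : Fin k, ((j i - 1) + 1) := by
    apply Finset.sum_congr rfl
    intro i _
    have := hpos i
    omega
  rw [Finset.sum_add_distrib] at h1
  simp at h1
  have h0 : ∑ i : Fin k, (j i - 1) = 0 := by omega
  funext i
  have := (Finset.sum_eq_zero_iff.mp h0) i (Finset.mem_univ i)
  have := hpos i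
  show j i = 1
  omega

private lemma sum_F_self (p : ℝ) (k : ℕ) :
    ∑ j ∈ F k k, ∏ i, ((j i : ℝ) ^ (p * (j i : ℝ))) ≤ 1 := by
  have hsub : F k k ⊆ {fun _ => 1} := by
    intro j hj
    rw [Finset.mem_singleton]
    exact F_self j hj
  calc ∑ j ∈ F k k, ∏ i, ((j i : ℝ) ^ (p * (j i : ℝ)))
      ≤ ∑ j ∈ ({fun _ => 1} : Finset (Fin k → ℕ)), ∏ i, ((j i : ℝ) ^ (p * (j i : ℝ))) := by
        apply Finset.sum_le_sum_of_subset_of_nonneg hsub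
        intro j _ _
        positivity
  _ = 1 := by simp

private lemma two_mul_pow (m : ℕ) (hm : 1 ≤ m) : 2 * ((m:ℝ))^m ≤ ((m:ℝ)+1)^m := by
  have hm0 : (0:ℝ) < (m:ℝ) := by exact_mod_cast hm
  have h := one_add_mul_le_pow (a := 1/(m:ℝ)) (le_trans (by norm_num : (-2:ℝ) ≤ 0) (by positivity)) m
  have h2 : (2:ℝ) ≤ (1+1/(m:ℝ))^m := by
    have : (m:ℝ) * (1/(m:ℝ)) = 1 := by field_simp
    nlinarith
  have h3 : (1+1/(m:ℝ))^m * (m:ℝ)^m = ((m:ℝ)+1)^m := by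
    rw [← mul_pow]
    congr 1
    field_simp
  nlinarith [pow_pos hm0 m]

private lemma castX (p : ℝ) (β : ℕ) (hβ : 1 ≤ β) :
    ((β:ℝ) - 1) ^ (p * ((β:ℝ) - 1)) = (((β-1)^(β-1) : ℕ) : ℝ)^p := by
  have h : ((β:ℝ) - 1) = ((β - 1 : ℕ) : ℝ) := by
    rw [Nat.cast_sub hβ]; norm_num
  rw [h, rpow_nat_mul]

private lemma key_final (p : ℝ) (hp : 1 ≤ p) (α : ℕ) (hα : 4 ≤ α) :
    (2 + (4:ℝ)^p) * (((α-2)^(α-2) : ℕ) : ℝ)^p ≤ (((α-1)^(α-1) : ℕ) : ℝ)^p := by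
  have hp0 : 0 ≤ p := le_trans zero_le_one hp
  have h6 : (2 + (4:ℝ)^p) ≤ (6:ℝ)^p := six_rpow p hp
  calc (2 + (4:ℝ)^p) * (((α-2)^(α-2) : ℕ) : ℝ)^p ≤ (6:ℝ)^p * (((α-2)^(α-2) : ℕ) : ℝ)^p := by
        apply mul_le_mul_of_nonneg_right h6 (by positivity)
  _ = ((6 * (α-2)^(α-2) : ℕ) : ℝ)^p := by
        rw [← Real.mul_rpow (by norm_num) (Nat.cast_nonneg _)]
        push_cast; ring_nf
  _ ≤ (((α-1)^(α-1) : ℕ) : ℝ)^p := by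
        apply cast_rpow_le p hp0
        -- 6 * (α-2)^(α-2) ≤ (α-1)^(α-1)
        have htm : 2 * ((α-2:ℕ):ℝ)^(α-2) ≤ ((((α-2):ℕ):ℝ)+1)^(α-2) := two_mul_pow (α-2) (by omega)
        have htm' : 2 * (α-2)^(α-2) ≤ (α-1)^(α-2) := by
          have hcast : ((α-2:ℕ):ℝ) + 1 = ((α-1:ℕ):ℝ) := by
            rw [Nat.cast_sub (by omega), Nat.cast_sub (by omega)]; ring
          rw [hcast] at htm
          exact_mod_cast htm
        calc 6 * (α-2)^(α-2) = 3 * (2 * (α-2)^(α-2)) := by ring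
        _ ≤ 3 * (α-1)^(α-2) := Nat.mul_le_mul_left _ htm'
        _ ≤ (α-1) * (α-1)^(α-2) := Nat.mul_le_mul_right _ (by omega)
        _ = (α-1)^(α-2+1) := by rw [pow_succ]; ring
        _ = (α-1)^(α-1) := by congr 1; omega

/-- For a real `p ≥ 1` and integers `2 ≤ k ≤ α`, the sum over ordered `k`-tuples of positive
integers summing to `α` of `∏ i, jᵢ^(p·jᵢ)` is bounded by
`min (2 + 4^p) α * (α-1)^(p(α-1))`. -/
theorem tuple_sum_rpow_bound (p : ℝ) (hp : 1 ≤ p) (α k : ℕ) (hk : 2 ≤ k) (hkα : k ≤ α) :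
    ∑ j ∈ (Finset.Nat.antidiagonalTuple k α).filter (fun j => ∀ i, 0 < j i),
        ∏ i, ((j i : ℝ) ^ (p * (j i : ℝ))) ≤
      min (2 + (4 : ℝ) ^ p) (α : ℝ) * ((α : ℝ) - 1) ^ (p * ((α : ℝ) - 1)) := by
  have hp0 : (0:ℝ) ≤ p := le_trans zero_le_one hp
  show ∑ j ∈ F k α, ∏ i, ((j i : ℝ) ^ (p * (j i : ℝ))) ≤
      min (2 + (4 : ℝ) ^ p) (α : ℝ) * ((α : ℝ) - 1) ^ (p * ((α : ℝ) - 1))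
  induction k, hk using Nat.le_induction generalizing α with
  | base =>
    -- k = 2
    rw [castX p α (by omega)]
    have hd := decomp p 1 α le_rfl
    rw [show (1:ℕ)+1 = 2 from rfl] at hd
    rw [hd]
    have hterm : ∀ a ∈ Ico 1 α,
        (a:ℝ)^(p*(a:ℝ)) * ∑ j ∈ F 1 (α-a), ∏ i, ((j i : ℝ) ^ (p * (j i : ℝ)))
          = ((a^a * (α-a)^(α-a) : ℕ) : ℝ)^p := by
      intro a ha
      rw [Finset.mem_Ico] at ha
      rw [F_one (α-a) (by omega), Finset.sum_singleton]
      have he : ∏ i : Fin 1, ((((![α-a] : Fin 1 → ℕ) i : ℕ) : ℝ)^(p * (((![α-a] : Fin 1 → ℕ) i : ℕ) : ℝ)))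
          = ((α-a : ℕ):ℝ)^(p*((α-a : ℕ):ℝ)) := by
        rw [Fin.prod_univ_one]
        norm_num
      rw [he, rpow_nat_mul, rpow_nat_mul,
        ← Real.mul_rpow (Nat.cast_nonneg _) (Nat.cast_nonneg _)]
      norm_cast
    rw [Finset.sum_congr rfl hterm]
    exact onedim p hp α hkα
  | succ k hk2 IH =>
    rw [castX p α (by omega)]
    set M := min (2 + (4:ℝ)^p) (α:ℝ) with hM
    have hM0 : 0 ≤ M := le_min (by positivity) (by positivity)
    by_cases hself : α = k+1
    · subst hself
      have h1 := sum_F_self p (k+1)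
      have h2M : 2 ≤ M := by
        apply le_min
        · have : (0:ℝ) ≤ (4:ℝ)^p := by positivity
          linarith
        · exact_mod_cast (by omega : 2 ≤ k+1)
      have hX1 : (1:ℝ) ≤ (((k+1-1)^(k+1-1) : ℕ) : ℝ)^p := by
        apply Real.one_le_rpow _ hp0
        have : 1 ≤ (k+1-1)^(k+1-1) := Nat.one_le_pow _ _ (by omega)
        exact_mod_cast this
      nlinarith
    · have hα4 : k + 2 ≤ α := by omega
      rw [decomp p k α (by omega)]
      have hsplit := Finset.sum_Ico_succ_top (a := 1) (b := α-1) (by omega)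
        (fun a => (a:ℝ)^(p*(a:ℝ)) * ∑ j ∈ F k (α-a), ∏ i, ((j i : ℝ) ^ (p * (j i : ℝ))))
      rw [show (α-1)+1 = α by omega] at hsplit
      rw [hsplit]
      have htop : (((α-1 : ℕ)):ℝ)^(p*((α-1 : ℕ):ℝ)) *
          ∑ j ∈ F k (α-(α-1)), ∏ i, ((j i : ℝ) ^ (p * (j i : ℝ))) = 0 := by
        rw [show α-(α-1) = 1 by omega, F_empty (by omega : 1 < k), Finset.sum_empty, mul_zero]
      rw [htop, add_zero]
      have hterm : ∀ a ∈ Ico 1 (α-1),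
          (a:ℝ)^(p*(a:ℝ)) * ∑ j ∈ F k (α-a), ∏ i, ((j i : ℝ) ^ (p * (j i : ℝ)))
            ≤ M * ((a^a * ((α-1)-a)^((α-1)-a) : ℕ) : ℝ)^p := by
        intro a ha
        rw [Finset.mem_Ico] at ha
        by_cases hak : k ≤ α - a
        · have hIH := IH (α-a) hak
          rw [castX p (α-a) (by omega)] at hIH
          have hmin : min (2+(4:ℝ)^p) ((α-a : ℕ):ℝ) ≤ M := by
            rw [hM]
            apply min_le_min_left
            exact_mod_cast Nat.sub_le α a
          have hY0 : (0:ℝ) ≤ (((α-a-1)^(α-a-1) : ℕ) : ℝ)^p := by positivity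
          have hIH2 : ∑ j ∈ F k (α-a), ∏ i, ((j i : ℝ) ^ (p * (j i : ℝ)))
              ≤ M * (((α-a-1)^(α-a-1) : ℕ) : ℝ)^p :=
            le_trans hIH (mul_le_mul_of_nonneg_right hmin hY0)
          calc (a:ℝ)^(p*(a:ℝ)) * ∑ j ∈ F k (α-a), ∏ i, ((j i : ℝ) ^ (p * (j i : ℝ)))
              ≤ (a:ℝ)^(p*(a:ℝ)) * (M * (((α-a-1)^(α-a-1) : ℕ) : ℝ)^p) := by
                apply mul_le_mul_of_nonneg_left hIH2 (by positivity)
          _ = M * (((a^a : ℕ):ℝ)^p * (((α-a-1)^(α-a-1) : ℕ) : ℝ)^p) := by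
                rw [rpow_nat_mul]; ring
          _ = M * ((a^a * ((α-1)-a)^((α-1)-a) : ℕ) : ℝ)^p := by
                rw [show α-a-1 = (α-1)-a by omega,
                  ← Real.mul_rpow (Nat.cast_nonneg _) (Nat.cast_nonneg _)]
                norm_cast
        · rw [F_empty (by omega : α - a < k), Finset.sum_empty, mul_zero]
          exact mul_nonneg hM0 (by positivity)
      calc ∑ a ∈ Ico 1 (α-1),
            (a:ℝ)^(p*(a:ℝ)) * ∑ j ∈ F k (α-a), ∏ i, ((j i : ℝ) ^ (p * (j i : ℝ)))
          ≤ ∑ a ∈ Ico 1 (α-1), M * ((a^a * ((α-1)-a)^((α-1)-a) : ℕ) : ℝ)^p :=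
            Finset.sum_le_sum hterm
      _ = M * ∑ a ∈ Ico 1 (α-1), ((a^a * ((α-1)-a)^((α-1)-a) : ℕ) : ℝ)^p := by
            rw [Finset.mul_sum]
      _ ≤ M * (min (2+(4:ℝ)^p) ((α-1 : ℕ):ℝ) * ((((α-1)-1)^((α-1)-1) : ℕ) : ℝ)^p) := by
            apply mul_le_mul_of_nonneg_left (onedim p hp (α-1) (by omega)) hM0
      _ ≤ M * ((2+(4:ℝ)^p) * (((α-2)^(α-2) : ℕ) : ℝ)^p) := by
            apply mul_le_mul_of_nonneg_left _ hM0
            rw [show (α-1)-1 = α-2 by omega]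
            apply mul_le_mul_of_nonneg_right (min_le_left _ _) (by positivity)
      _ ≤ M * (((α-1)^(α-1) : ℕ) : ℝ)^p := by
            apply mul_le_mul_of_nonneg_left (key_final p hp α (by omega)) hM0
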